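/- Fix m, n, d ≥ 1, scales ν, ε > 0, an activation σ : ℝ → ℝ that is twice continuously differentiable with σ(0) = 0, σ'(0) = 1, |σ'| ≤ 1 and |σ''| ≤ 1 on ℝ, and data (x_i, y_i)_{i=1}^n with ‖x_i‖₂ ≤ 1 and |y_i| ≤ 1. For parameters θ = (a_k, w_k)_{k=1}^m define for each k ∈ [m]: f_k = (1/n) Σ_{i=1}^n ( e_i(θ)·σ(ε⟨w_k, x_i⟩)/ε + y_i·⟨w_k, x_i⟩ ), g_k = (1/n) Σ_{i=1}^n ( e_i(θ)·a_k·σ'(ε⟨w_k, x_i⟩) + y_i·a_k )·x_i, q_k = √((ν²/ε²)·a_k² + ‖w_k‖₂²), and q_max = max_{k ∈ [m]} q_k. Then for every k ∈ [m]: |f_k| ≤ m·ε²·q_max²·‖w_k‖₂ + ε·‖w_k‖₂², and ‖g_k‖₂ ≤ m·ε²·q_max²·|a_k| + ε·‖w_k‖₂·|a_k|. -/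

import Mathlib

open Finset

/-- Lipschitz-type bound from derivative bound. -/
lemma aux_lip {φ : ℝ → ℝ} (hd : Differentiable ℝ φ) {C : ℝ}
    (hb : ∀ u : ℝ, |deriv φ u| ≤ C) (u v : ℝ) : |φ u - φ v| ≤ C * |u - v| := by
  have := Convex.norm_image_sub_le_of_norm_hasDerivWithin_le
    (f := φ) (f' := deriv φ) (s := Set.univ) (C := C)
    (fun z _ => (hd z).hasDerivAt.hasDerivWithinAt)
    (fun z _ => by simpa using hb z) convex_univ (Set.mem_univ v) (Set.mem_univ u)
  simpa using this

/-- Cauchy–Schwarz with absolute value. -/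
lemma aux_cs {d : ℕ} (f g : Fin d → ℝ) :
    |∑ t, f t * g t| ≤ Real.sqrt (∑ t, f t ^ 2) * Real.sqrt (∑ t, g t ^ 2) := by
  have h1 : |∑ t, f t * g t| ≤ ∑ t, |f t| * |g t| := by
    calc |∑ t, f t * g t| ≤ ∑ t, |f t * g t| := Finset.abs_sum_le_sum_abs _ _
      _ = ∑ t, |f t| * |g t| := by simp [abs_mul]
  have h2 := Real.sum_mul_le_sqrt_mul_sqrt univ (fun t => |f t|) (fun t => |g t|)
  simp only [sq_abs] at h2
  exact h1.trans h2

/-- Quadratic Taylor bound. -/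
lemma aux_taylor {φ : ℝ → ℝ} (hd : Differentiable ℝ φ)
    (hb : ∀ v : ℝ, |deriv φ v - 1| ≤ |v|) (h0 : φ 0 = 0) (u : ℝ) :
    |φ u - u| ≤ u ^ 2 := by
  have key := Convex.norm_image_sub_le_of_norm_hasDerivWithin_le
    (f := fun v => φ v - v) (f' := fun v => deriv φ v - 1) (s := Set.uIcc 0 u) (C := |u|)
    (fun v _ => ((hd v).hasDerivAt.sub (hasDerivAt_id v)).hasDerivWithinAt)
    (fun v hv => by
      have h1 : |v| ≤ |u| := by
        rw [Set.uIcc_eq_union] at hv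
        rcases hv with h | h
        · rcases Set.mem_Icc.mp h with ⟨h1, h2⟩
          rw [abs_le]; constructor <;> nlinarith [le_abs_self u, neg_abs_le u]
        · rcases Set.mem_Icc.mp h with ⟨h1, h2⟩
          rw [abs_le]; constructor <;> nlinarith [le_abs_self u, neg_abs_le u]
      calc ‖deriv φ v - 1‖ = |deriv φ v - 1| := rfl
        _ ≤ |v| := hb v
        _ ≤ |u| := h1)
    (convex_uIcc 0 u) Set.left_mem_uIcc Set.right_mem_uIcc
  have : ‖(φ u - u) - (φ 0 - 0)‖ ≤ |u| * ‖u - 0‖ := key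
  simp only [h0, sub_zero, Real.norm_eq_abs] at this
  calc |φ u - u| ≤ |u| * |u| := this
    _ = u ^ 2 := by rw [← abs_mul, abs_mul_self u, ← sq]

theorem stmt_17 (m n d : ℕ) (hm : 1 ≤ m) (hn : 1 ≤ n) (hd : 1 ≤ d)
    (ν ε : ℝ) (hν : 0 < ν) (hε : 0 < ε)
    (σ : ℝ → ℝ) (hσ : ContDiff ℝ 2 σ) (hσ0 : σ 0 = 0) (hσ1 : deriv σ 0 = 1)
    (hσ' : ∀ u : ℝ, |deriv σ u| ≤ 1) (hσ'' : ∀ u : ℝ, |deriv (deriv σ) u| ≤ 1)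
    (x : Fin n → Fin d → ℝ) (y : Fin n → ℝ)
    (hx : ∀ i, Real.sqrt (∑ t, (x i t) ^ 2) ≤ 1) (hy : ∀ i, |y i| ≤ 1)
    (a : Fin m → ℝ) (w : Fin m → Fin d → ℝ)
    (e : Fin n → ℝ)
    (he : ∀ i, e i = (∑ k, ν * a k * σ (ε * ∑ t, w k t * x i t)) - y i)
    (f : Fin m → ℝ)
    (hf : ∀ k, f k = (1 / (n : ℝ)) *
      ∑ i, (e i * σ (ε * ∑ t, w k t * x i t) / ε + y i * ∑ t, w k t * x i t))
    (g : Fin m → Fin d → ℝ)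
    (hg : ∀ k j, g k j = (1 / (n : ℝ)) *
      ∑ i, (e i * a k * deriv σ (ε * ∑ t, w k t * x i t) + y i * a k) * x i j)
    (q : Fin m → ℝ)
    (hq : ∀ k, q k = Real.sqrt ((ν ^ 2 / ε ^ 2) * (a k) ^ 2 + ∑ t, (w k t) ^ 2))
    (qmax : ℝ) (hqmax : qmax = ⨆ k, q k) :
    ∀ k,
      |f k| ≤ m * ε ^ 2 * qmax ^ 2 * Real.sqrt (∑ t, (w k t) ^ 2)
          + ε * (∑ t, (w k t) ^ 2)
      ∧ Real.sqrt (∑ j, (g k j) ^ 2) ≤ m * ε ^ 2 * qmax ^ 2 * |a k|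
          + ε * Real.sqrt (∑ t, (w k t) ^ 2) * |a k| := by
  -- differentiability facts
  have hdσ : Differentiable ℝ σ := hσ.differentiable (by norm_num)
  have hσ2 : ContDiff ℝ (1 + 1 : ℕ) σ := by exact_mod_cast hσ
  have hdσ' : Differentiable ℝ (deriv σ) := by
    have h2 := (contDiff_succ_iff_deriv.mp (by exact_mod_cast hσ2 : ContDiff ℝ ((1 : WithTop ℕ∞) + 1) σ)).2.2
    exact h2.differentiable one_ne_zero
  -- |σ u| ≤ |u|
  have hσ_abs : ∀ u : ℝ, |σ u| ≤ |u| := fun u => by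
    have := aux_lip hdσ hσ' u 0
    simpa [hσ0] using this
  -- |σ u − u| ≤ u²
  have hσ_tay : ∀ u : ℝ, |σ u - u| ≤ u ^ 2 := by
    refine aux_taylor hdσ (fun v => ?_) hσ0
    have := aux_lip hdσ' hσ'' v 0
    simpa [hσ1] using this
  -- |σ' u − 1| ≤ |u|
  have hσ'_tay : ∀ u : ℝ, |deriv σ u - 1| ≤ |u| := fun u => by
    have := aux_lip hdσ' hσ'' u 0
    simpa [hσ1] using this
  -- basic quantities
  have hn0 : (0 : ℝ) < n := by exact_mod_cast hn
  have hq_le : ∀ k, q k ≤ qmax := by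
    intro k
    rw [hqmax]
    exact le_ciSup (Set.Finite.bddAbove (Set.finite_range q)) k
  have hq_nonneg : ∀ k, 0 ≤ q k := fun k => by rw [hq]; exact Real.sqrt_nonneg _
  have hqmax0 : 0 ≤ qmax := le_trans (hq_nonneg ⟨0, hm⟩) (hq_le ⟨0, hm⟩)
  have hW_le : ∀ k, Real.sqrt (∑ t, (w k t) ^ 2) ≤ q k := fun k => by
    rw [hq]
    exact Real.sqrt_le_sqrt (le_add_of_nonneg_left (by positivity))
  have ha_le : ∀ k, (ν / ε) * |a k| ≤ q k := fun k => by
    rw [hq]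
    have : (ν / ε) * |a k| = Real.sqrt ((ν ^ 2 / ε ^ 2) * (a k) ^ 2) := by
      rw [show (ν ^ 2 / ε ^ 2) * (a k) ^ 2 = ((ν / ε) * |a k|) ^ 2 by
        rw [mul_pow, div_pow, sq_abs]]
      rw [Real.sqrt_sq (by positivity)]
    rw [this]
    exact Real.sqrt_le_sqrt (le_add_of_nonneg_right (by positivity))
  -- Cauchy–Schwarz: |⟨w k, x i⟩| ≤ ‖w k‖
  have hs_abs : ∀ (k : Fin m) (i : Fin n),
      |∑ t, w k t * x i t| ≤ Real.sqrt (∑ t, (w k t) ^ 2) := fun k i => by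
    calc |∑ t, w k t * x i t|
        ≤ Real.sqrt (∑ t, (w k t) ^ 2) * Real.sqrt (∑ t, (x i t) ^ 2) := aux_cs _ _
      _ ≤ Real.sqrt (∑ t, (w k t) ^ 2) * 1 :=
          mul_le_mul_of_nonneg_left (hx i) (Real.sqrt_nonneg _)
      _ = _ := mul_one _
  have hs_q : ∀ (k : Fin m) (i : Fin n), |∑ t, w k t * x i t| ≤ q k :=
    fun k i => (hs_abs k i).trans (hW_le k)
  -- bound on the network output F i = e i + y i
  set F : Fin n → ℝ := fun i => ∑ k, ν * a k * σ (ε * ∑ t, w k t * x i t) with hF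
  have hF_bound : ∀ i, |F i| ≤ m * ε ^ 2 * qmax ^ 2 := by
    intro i
    have hterm : ∀ k : Fin m, |ν * a k * σ (ε * ∑ t, w k t * x i t)| ≤ ε ^ 2 * qmax ^ 2 := by
      intro k
      have h1 : |σ (ε * ∑ t, w k t * x i t)| ≤ ε * |∑ t, w k t * x i t| := by
        have := hσ_abs (ε * ∑ t, w k t * x i t)
        calc |σ (ε * ∑ t, w k t * x i t)| ≤ |ε * ∑ t, w k t * x i t| := this
          _ = ε * |∑ t, w k t * x i t| := by rw [abs_mul, abs_of_pos hε]
      have h2 : |∑ t, w k t * x i t| ≤ q k := hs_q k i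
      have h3 : (ν / ε) * |a k| ≤ q k := ha_le k
      have hqk : q k ≤ qmax := hq_le k
      have hq0 : 0 ≤ q k := hq_nonneg k
      calc |ν * a k * σ (ε * ∑ t, w k t * x i t)|
          = ν * |a k| * |σ (ε * ∑ t, w k t * x i t)| := by
            rw [abs_mul, abs_mul, abs_of_pos hν]
        _ ≤ ν * |a k| * (ε * |∑ t, w k t * x i t|) := by
            apply mul_le_mul_of_nonneg_left h1 (by positivity)
        _ = ε ^ 2 * (((ν / ε) * |a k|) * |∑ t, w k t * x i t|) := by
            field_simp
        _ ≤ ε ^ 2 * (q k * q k) := by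
            apply mul_le_mul_of_nonneg_left _ (by positivity)
            exact mul_le_mul h3 h2 (abs_nonneg _) hq0
        _ ≤ ε ^ 2 * (qmax * qmax) := by
            apply mul_le_mul_of_nonneg_left _ (by positivity)
            exact mul_le_mul hqk hqk hq0 hqmax0
        _ = ε ^ 2 * qmax ^ 2 := by ring
    calc |F i| ≤ ∑ k : Fin m, |ν * a k * σ (ε * ∑ t, w k t * x i t)| :=
          Finset.abs_sum_le_sum_abs _ _
      _ ≤ ∑ _k : Fin m, ε ^ 2 * qmax ^ 2 := Finset.sum_le_sum (fun k _ => hterm k)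
      _ = m * ε ^ 2 * qmax ^ 2 := by
          rw [Finset.sum_const, card_univ, Fintype.card_fin]; push_cast; ring
  have heF : ∀ i, e i = F i - y i := fun i => he i
  intro k
  set W : ℝ := Real.sqrt (∑ t, (w k t) ^ 2) with hWdef
  have hW0 : 0 ≤ W := Real.sqrt_nonneg _
  have hW2 : ∀ i, (∑ t, w k t * x i t) ^ 2 ≤ ∑ t, (w k t) ^ 2 := by
    intro i
    have h := hs_abs k i
    have hmm := mul_self_le_mul_self (abs_nonneg (∑ t, w k t * x i t)) h
    nlinarith [Real.sq_sqrt (show (0:ℝ) ≤ ∑ t, (w k t) ^ 2 by positivity),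
      sq_abs (∑ t, w k t * x i t)]
  constructor
  · -- f bound
    have hterm : ∀ i : Fin n,
        |e i * σ (ε * ∑ t, w k t * x i t) / ε + y i * ∑ t, w k t * x i t|
          ≤ m * ε ^ 2 * qmax ^ 2 * W + ε * (∑ t, (w k t) ^ 2) := by
      intro i
      set s := ∑ t, w k t * x i t with hsdef
      have hrw : e i * σ (ε * s) / ε + y i * s
          = F i * σ (ε * s) / ε + y i * (s - σ (ε * s) / ε) := by
        rw [heF i]; field_simp; ring
      rw [hrw]
      have h1 : |F i * σ (ε * s) / ε| ≤ m * ε ^ 2 * qmax ^ 2 * W := by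
        have hσa : |σ (ε * s)| ≤ ε * |s| := by
          calc |σ (ε * s)| ≤ |ε * s| := hσ_abs _
            _ = ε * |s| := by rw [abs_mul, abs_of_pos hε]
        have hFm := hF_bound i
        have hsW : |s| ≤ W := hs_abs k i
        have hFm0 : (0:ℝ) ≤ m * ε ^ 2 * qmax ^ 2 := by positivity
        calc |F i * σ (ε * s) / ε| = |F i| * |σ (ε * s)| / ε := by
              rw [abs_div, abs_mul, abs_of_pos hε]
          _ ≤ (m * ε ^ 2 * qmax ^ 2) * (ε * |s|) / ε := by
              gcongr
          _ = m * ε ^ 2 * qmax ^ 2 * |s| := by field_simp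
          _ ≤ m * ε ^ 2 * qmax ^ 2 * W := mul_le_mul_of_nonneg_left hsW hFm0
      have h2 : |y i * (s - σ (ε * s) / ε)| ≤ ε * (∑ t, (w k t) ^ 2) := by
        have htay : |σ (ε * s) - ε * s| ≤ (ε * s) ^ 2 := hσ_tay (ε * s)
        have : |s - σ (ε * s) / ε| ≤ ε * s ^ 2 := by
          have heq : s - σ (ε * s) / ε = -((σ (ε * s) - ε * s) / ε) := by field_simp; ring
          rw [heq, abs_neg, abs_div, abs_of_pos hε, div_le_iff₀ hε]
          calc |σ (ε * s) - ε * s| ≤ (ε * s) ^ 2 := htay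
            _ = ε * s ^ 2 * ε := by ring
        calc |y i * (s - σ (ε * s) / ε)| = |y i| * |s - σ (ε * s) / ε| := abs_mul _ _
          _ ≤ 1 * (ε * s ^ 2) := mul_le_mul (hy i) this (abs_nonneg _) zero_le_one
          _ = ε * s ^ 2 := one_mul _
          _ ≤ ε * (∑ t, (w k t) ^ 2) := mul_le_mul_of_nonneg_left (hW2 i) hε.le
      calc |F i * σ (ε * s) / ε + y i * (s - σ (ε * s) / ε)|
          ≤ |F i * σ (ε * s) / ε| + |y i * (s - σ (ε * s) / ε)| := abs_add_le _ _
        _ ≤ m * ε ^ 2 * qmax ^ 2 * W + ε * (∑ t, (w k t) ^ 2) := add_le_add h1 h2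
    rw [hf]
    set B := m * ε ^ 2 * qmax ^ 2 * W + ε * (∑ t, (w k t) ^ 2) with hBdef
    calc |1 / (n:ℝ) * ∑ i, (e i * σ (ε * ∑ t, w k t * x i t) / ε + y i * ∑ t, w k t * x i t)|
        = 1 / (n:ℝ) * |∑ i, (e i * σ (ε * ∑ t, w k t * x i t) / ε + y i * ∑ t, w k t * x i t)| := by
          rw [abs_mul, abs_of_pos (by positivity : (0:ℝ) < 1 / (n:ℝ))]
      _ ≤ 1 / (n:ℝ) * ∑ i, |e i * σ (ε * ∑ t, w k t * x i t) / ε + y i * ∑ t, w k t * x i t| := by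
          apply mul_le_mul_of_nonneg_left (Finset.abs_sum_le_sum_abs _ _) (by positivity)
      _ ≤ 1 / (n:ℝ) * ∑ _i : Fin n, B := by
          apply mul_le_mul_of_nonneg_left (Finset.sum_le_sum (fun i _ => hterm i)) (by positivity)
      _ = B := by
          rw [Finset.sum_const, card_univ, Fintype.card_fin, nsmul_eq_mul]
          field_simp
  · -- g bound
    set c : Fin n → ℝ := fun i =>
      e i * a k * deriv σ (ε * ∑ t, w k t * x i t) + y i * a k with hcdef
    have hc_bound : ∀ i, |c i| ≤ |a k| * (m * ε ^ 2 * qmax ^ 2 + ε * W) := by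
      intro i
      set s := ∑ t, w k t * x i t with hsdef
      have hrw : c i = a k * (F i * deriv σ (ε * s) + y i * (1 - deriv σ (ε * s))) := by
        simp only [hcdef, heF i]; ring
      rw [hrw, abs_mul]
      apply mul_le_mul_of_nonneg_left _ (abs_nonneg _)
      have h1 : |F i * deriv σ (ε * s)| ≤ m * ε ^ 2 * qmax ^ 2 := by
        calc |F i * deriv σ (ε * s)| = |F i| * |deriv σ (ε * s)| := abs_mul _ _
          _ ≤ (m * ε ^ 2 * qmax ^ 2) * 1 :=
              mul_le_mul (hF_bound i) (hσ' _) (abs_nonneg _) (by positivity)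
          _ = m * ε ^ 2 * qmax ^ 2 := mul_one _
      have h2 : |y i * (1 - deriv σ (ε * s))| ≤ ε * W := by
        have := hσ'_tay (ε * s)
        have h3 : |1 - deriv σ (ε * s)| ≤ ε * |s| := by
          rw [abs_sub_comm]
          calc |deriv σ (ε * s) - 1| ≤ |ε * s| := this
            _ = ε * |s| := by rw [abs_mul, abs_of_pos hε]
        calc |y i * (1 - deriv σ (ε * s))| = |y i| * |1 - deriv σ (ε * s)| := abs_mul _ _
          _ ≤ 1 * (ε * |s|) := mul_le_mul (hy i) h3 (abs_nonneg _) zero_le_one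
          _ = ε * |s| := one_mul _
          _ ≤ ε * W := mul_le_mul_of_nonneg_left (hs_abs k i) hε.le
      calc |F i * deriv σ (ε * s) + y i * (1 - deriv σ (ε * s))|
          ≤ |F i * deriv σ (ε * s)| + |y i * (1 - deriv σ (ε * s))| := abs_add_le _ _
        _ ≤ m * ε ^ 2 * qmax ^ 2 + ε * W := add_le_add h1 h2
    -- vector norm estimate
    set C : ℝ := |a k| * (m * ε ^ 2 * qmax ^ 2 + ε * W) with hCdef
    have hC0 : 0 ≤ C := by
      apply mul_nonneg (abs_nonneg _); positivity
    set V : Fin n → EuclideanSpace ℝ (Fin d) := fun i => WithLp.toLp 2 (fun j => c i * x i j) with hVdef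
    have hVnorm : ∀ i, ‖V i‖ ≤ C := by
      intro i
      rw [EuclideanSpace.norm_eq]
      have : ∀ j, ‖V i j‖ ^ 2 = (c i) ^ 2 * (x i j) ^ 2 := by
        intro j; rw [Real.norm_eq_abs, sq_abs, hVdef]; simp only [WithLp.ofLp_toLp]; ring
      simp only [this]
      rw [← Finset.mul_sum, Real.sqrt_mul (sq_nonneg _), Real.sqrt_sq_eq_abs]
      calc |c i| * Real.sqrt (∑ j, (x i j) ^ 2) ≤ C * 1 :=
          mul_le_mul (hc_bound i) (hx i) (Real.sqrt_nonneg _) hC0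
        _ = C := mul_one _
    set S : EuclideanSpace ℝ (Fin d) := (1 / (n:ℝ)) • ∑ i, V i with hS
    have happ : ∀ j, g k j = S j := by
      intro j
      have h1 : S j = (1 / (n:ℝ)) * (∑ i, V i) j := by
        rw [hS, PiLp.smul_apply, smul_eq_mul]
      have h2 : (∑ i, V i) j = ∑ i, c i * x i j := by
        rw [WithLp.ofLp_sum, Finset.sum_apply]
      rw [hg, h1, h2]
    have hnorm_eq : Real.sqrt (∑ j, (g k j) ^ 2) = ‖S‖ := by
      rw [EuclideanSpace.norm_eq]
      congr 1
      refine Finset.sum_congr rfl (fun j _ => ?_)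
      rw [happ j, Real.norm_eq_abs, sq_abs]
    rw [hnorm_eq]
    have hSC : ‖S‖ ≤ C := by
      rw [hS, norm_smul]
      have h1 : ‖∑ i, V i‖ ≤ ∑ _i : Fin n, C :=
        le_trans (norm_sum_le _ _) (Finset.sum_le_sum (fun i _ => hVnorm i))
      have h2 : ‖(1 / (n:ℝ))‖ = 1 / (n:ℝ) := by
        rw [Real.norm_eq_abs, abs_of_pos (by positivity)]
      rw [h2]
      calc 1 / (n:ℝ) * ‖∑ i, V i‖ ≤ 1 / (n:ℝ) * ∑ _i : Fin n, C := by
            apply mul_le_mul_of_nonneg_left h1 (by positivity)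
        _ = C := by
            rw [Finset.sum_const, card_univ, Fintype.card_fin, nsmul_eq_mul]
            field_simp
    calc ‖S‖ ≤ C := hSC
      _ = m * ε ^ 2 * qmax ^ 2 * |a k| + ε * W * |a k| := by rw [hCdef]; ring
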